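/- Consider the string rewrite rule ba →_R ab over the alphabet {a,b}, and let L̂ = { v ∈ {a,b}* | ∃ u ∈ L((ab)*) : u →_R* v }. Then L̂ ∩ L(a* b*) = { a^n b^n | n ≥ 0 }; consequently L̂ is not regular, even though for each fixed string u the set { v | u →_R* v } is finite and L((ab)*) is regular. -/

import Mathlib

/-- The alphabet `{a, b}`. -/
inductive AB : Type
  | a : AB
  | b : AB
deriving DecidableEq

instance instFintypeAB : Fintype AB :=
  ⟨{AB.a, AB.b}, fun x => by cases x <;> simp⟩

/-- The string rewrite relation `→_R` given by the single rule `ba → ab`. -/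
def StepR (u v : List AB) : Prop :=
  ∃ x z : List AB, u = x ++ [AB.b, AB.a] ++ z ∧ v = x ++ [AB.a, AB.b] ++ z

/-- The language of the regular expression `(ab)*`. -/
def Labstar : Language AB :=
  {w | ∃ k : ℕ, w = (List.replicate k [AB.a, AB.b]).flatten}


-- invariants
lemma step_count (c : AB) {u v : List AB} (h : StepR u v) : v.count c = u.count c := by
  obtain ⟨x, z, rfl, rfl⟩ := h
  simp [List.count_append, List.count_cons]; omega

lemma rtg_count (c : AB) {u v : List AB} (h : Relation.ReflTransGen StepR u v) :
    v.count c = u.count c := by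
  induction h with
  | refl => rfl
  | tail _ hs ih => rw [step_count c hs, ih]

lemma step_length {u v : List AB} (h : StepR u v) : v.length = u.length := by
  obtain ⟨x, z, rfl, rfl⟩ := h; simp

lemma rtg_length {u v : List AB} (h : Relation.ReflTransGen StepR u v) :
    v.length = u.length := by
  induction h with
  | refl => rfl
  | tail _ hs ih => rw [step_length hs, ih]

lemma count_abstar (c : AB) (k : ℕ) :
    ((List.replicate k [AB.a, AB.b]).flatten).count c = k := by
  induction k with
  | zero => simp
  | succ n ih => cases c <;> simp_all [List.replicate_succ, List.count_cons]

lemma count_replicate_ne : (List.replicate 3 AB.a).count AB.b = 0 := by decide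

-- context closure
lemma rtg_context {u v : List AB} (x z : List AB) (h : Relation.ReflTransGen StepR u v) :
    Relation.ReflTransGen StepR (x ++ u ++ z) (x ++ v ++ z) := by
  induction h with
  | refl => exact .refl
  | tail _ hs ih =>
      refine ih.tail ?_
      obtain ⟨p, q, rfl, rfl⟩ := hs
      exact ⟨x ++ p, q ++ z, by simp, by simp⟩

lemma b_past_as (n : ℕ) :
    Relation.ReflTransGen StepR (AB.b :: List.replicate n AB.a)
      (List.replicate n AB.a ++ [AB.b]) := by
  induction n with
  | zero => simp; exact .refl
  | succ n ih =>
      have h1 : StepR (AB.b :: List.replicate (n+1) AB.a)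
          (AB.a :: AB.b :: List.replicate n AB.a) :=
        ⟨[], List.replicate n AB.a, by simp [List.replicate_succ], by simp⟩
      have h2 := rtg_context [AB.a] ([] : List AB) ih
      simp at h2
      refine (Relation.ReflTransGen.single h1).trans ?_
      simpa [List.replicate_succ] using h2

lemma reach_anbn (n : ℕ) :
    Relation.ReflTransGen StepR ((List.replicate n [AB.a, AB.b]).flatten)
      (List.replicate n AB.a ++ List.replicate n AB.b) := by
  induction n with
  | zero => simp; exact .refl
  | succ n ih =>
      have h1 := rtg_context [AB.a, AB.b] ([] : List AB) ih
      simp at h1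
      have h2 := rtg_context [AB.a] (List.replicate n AB.b) (b_past_as n)
      rw [List.replicate_succ, List.flatten_cons]
      refine Relation.ReflTransGen.trans (by simpa using h1) ?_
      have e1 : (AB.a :: AB.b :: (List.replicate n AB.a ++ List.replicate n AB.b))
          = [AB.a] ++ (AB.b :: List.replicate n AB.a) ++ List.replicate n AB.b := by simp
      have e2 : List.replicate (n+1) AB.a ++ List.replicate (n+1) AB.b
          = [AB.a] ++ (List.replicate n AB.a ++ [AB.b]) ++ List.replicate n AB.b := by
        simp [List.replicate_succ]
      rw [e1, e2]
      exact h2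


-- total count
lemma count_total (l : List AB) : l.count AB.a + l.count AB.b = l.length := by
  induction l with
  | nil => rfl
  | cons c t ih => cases c <;> simp [List.count_cons] <;> omega

-- membership in Lhat forces equal counts
lemma lhat_counts {v : List AB}
    (h : ∃ u ∈ Labstar, Relation.ReflTransGen StepR u v) :
    v.count AB.a = v.count AB.b := by
  obtain ⟨u, ⟨k, rfl⟩, hr⟩ := h
  rw [rtg_count AB.a hr, rtg_count AB.b hr, count_abstar, count_abstar]

-- the DFA for (ab)*
inductive St : Type | s0 | s1 | s2 deriving DecidableEq

instance : Fintype St :=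
  ⟨{St.s0, St.s1, St.s2}, fun x => by cases x <;> simp⟩

def Mab : DFA AB St where
  step := fun s c => match s, c with
    | St.s0, AB.a => St.s1
    | St.s1, AB.b => St.s0
    | _, _ => St.s2
  start := St.s0
  accept := {St.s0}

lemma Mab_eval (w : List AB) :
    (Mab.evalFrom St.s0 w = St.s0 ↔ w ∈ Labstar) ∧
    (Mab.evalFrom St.s1 w = St.s0 ↔
      ∃ k, w = AB.b :: (List.replicate k [AB.a, AB.b]).flatten) ∧
    (Mab.evalFrom St.s2 w ≠ St.s0) := by
  induction w with
  | nil =>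
      refine ⟨⟨fun _ => ⟨0, rfl⟩, fun _ => rfl⟩, ⟨fun h => by simp [DFA.evalFrom] at h,
        fun ⟨k, hk⟩ => by simp at hk⟩, by simp [DFA.evalFrom]⟩
  | cons c w ih =>
      obtain ⟨ih0, ih1, ih2⟩ := ih
      have e : ∀ s, Mab.evalFrom s (c :: w) = Mab.evalFrom (Mab.step s c) w := fun s => rfl
      cases c
      · -- c = a
        refine ⟨?_, ?_, ?_⟩
        · rw [e]
          show Mab.evalFrom St.s1 w = St.s0 ↔ _
          rw [ih1]
          constructor
          · rintro ⟨k, rfl⟩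
            exact ⟨k + 1, by simp [List.replicate_succ]⟩
          · rintro ⟨k, hk⟩
            cases k with
            | zero => simp at hk
            | succ k =>
                simp [List.replicate_succ] at hk
                exact ⟨k, hk⟩
        · rw [e]
          show Mab.evalFrom St.s2 w = St.s0 ↔ _
          constructor
          · exact fun h => absurd h ih2
          · rintro ⟨k, hk⟩; simp at hk
        · rw [e]; exact ih2
      · -- c = b
        refine ⟨?_, ?_, ?_⟩
        · rw [e]
          show Mab.evalFrom St.s2 w = St.s0 ↔ _
          constructor
          · exact fun h => absurd h ih2
          · rintro ⟨k, hk⟩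
            cases k with
            | zero => simp at hk
            | succ k => simp [List.replicate_succ] at hk
        · rw [e]
          show Mab.evalFrom St.s0 w = St.s0 ↔ _
          rw [ih0]
          constructor
          · rintro ⟨k, rfl⟩; exact ⟨k, rfl⟩
          · rintro ⟨k, hk⟩; exact ⟨k, by simpa using hk⟩
        · rw [e]; exact ih2

lemma Labstar_regular : Language.IsRegular Labstar := by
  refine ⟨St, inferInstance, Mab, ?_⟩
  ext w
  rw [DFA.mem_accepts]
  show Mab.evalFrom St.s0 w ∈ ({St.s0} : Set St) ↔ _
  simp only [Set.mem_singleton_iff]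
  exact (Mab_eval w).1

/-- For `L̂ = { v | ∃ u ∈ L((ab)*), u →_R* v }` one has
`L̂ ∩ L(a* b*) = { a^n b^n | n ≥ 0 }`; consequently `L̂` is not regular, even
though for each fixed `u` the set `{ v | u →_R* v }` is finite and `L((ab)*)`
is regular. -/
theorem bubble_sort_closure_not_regular :
    ({v : List AB | ∃ u ∈ Labstar, Relation.ReflTransGen StepR u v} ∩
        {w : List AB | ∃ m n : ℕ,
          w = List.replicate m AB.a ++ List.replicate n AB.b} =
      {w : List AB | ∃ n : ℕ,
          w = List.replicate n AB.a ++ List.replicate n AB.b}) ∧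
    ¬ Language.IsRegular
        {v : List AB | ∃ u ∈ Labstar, Relation.ReflTransGen StepR u v} ∧
    (∀ u : List AB, Set.Finite {v : List AB | Relation.ReflTransGen StepR u v}) ∧
    Language.IsRegular Labstar := by
  have memL : ∀ n : ℕ, (List.replicate n AB.a ++ List.replicate n AB.b) ∈
      {v : List AB | ∃ u ∈ Labstar, Relation.ReflTransGen StepR u v} := by
    intro n
    exact ⟨(List.replicate n [AB.a, AB.b]).flatten, ⟨n, rfl⟩, reach_anbn n⟩
  refine ⟨?_, ?_, ?_, Labstar_regular⟩
  · ext w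
    constructor
    · rintro ⟨hw, m, n, rfl⟩
      have hc := lhat_counts hw
      simp [List.count_append, List.count_replicate] at hc
      exact ⟨m, by rw [hc]⟩
    · rintro ⟨n, rfl⟩
      exact ⟨memL n, n, n, rfl⟩
  · rintro ⟨σ, fσ, M, hM⟩
    set p := Fintype.card σ with hp
    have hx : (List.replicate p AB.a ++ List.replicate p AB.b) ∈ M.accepts := by
      rw [hM]; exact memL p
    have hlen : p ≤ (List.replicate p AB.a ++ List.replicate p AB.b).length := by
      simp
    obtain ⟨a', b', c', hsplit, hle, hne, hpump⟩ := M.pumping_lemma hx hlen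
    -- pumped word a' ++ b' ++ b' ++ c' is accepted
    have hw : a' ++ (b' ++ b') ++ c' ∈ M.accepts := by
      apply hpump
      refine ⟨a' ++ (b' ++ b'), ?_, c', rfl, by simp⟩
      refine ⟨a', rfl, b' ++ b', ?_, rfl⟩
      exact ⟨[b', b'], by simp, by intro y hy; simp at hy; subst hy; rfl⟩
    rw [hM] at hw
    have hc := lhat_counts hw
    -- b' consists only of a's
    have hprefix : a' ++ b' = List.replicate (a'.length + b'.length) AB.a := by
      have h1 : a' ++ b' = (a' ++ b' ++ c').take (a'.length + b'.length) := by
        simp [List.take_append]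
      rw [h1, ← hsplit, List.take_append, List.take_replicate,
        min_eq_left hle]
      simp [Nat.sub_eq_zero_of_le hle]; omega
    have hb'b : b'.count AB.b = 0 := by
      have h1 : (a' ++ b').count AB.b = 0 := by
        rw [hprefix, List.count_replicate]; simp
      simp [List.count_append] at h1
      omega
    have hb'a : b'.count AB.a = b'.length := by
      have := count_total b'
      omega
    -- counts of original word
    have hxa : a'.count AB.a + b'.count AB.a + c'.count AB.a = p := by
      have h := congrArg (List.count AB.a) hsplit
      simp [List.count_append, List.count_replicate] at h
      omega
    have hxb : a'.count AB.b + b'.count AB.b + c'.count AB.b = p := by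
      have h := congrArg (List.count AB.b) hsplit
      simp [List.count_append, List.count_replicate] at h
      omega
    simp [List.count_append] at hc
    have : b'.length = 0 := by omega
    exact hne (List.length_eq_zero_iff.mp this)
  · intro u
    apply Set.Finite.subset (List.finite_length_eq AB u.length)
    intro v hv
    exact rtg_length hv
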